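/- Let X be a compact Hausdorff, first-countable, ω₁-free space (no injective converging ω₁-sequence) and suppose ⟨x_α : α < ω₁⟩ is an injective ω₁-sequence in X. Then there exist two open sets O₁, O₂ with disjoint closures such that each O_i contains x_α for uncountably many α. -/

import Mathlib

/-- The ordinals below ω₁. -/
abbrev Omega1 : Type 1 := {o : Ordinal // o < (Cardinal.aleph 1).ord}

open Cardinal

lemma omega1_not_countable : ¬ (Set.univ : Set Omega1).Countable := by
  rw [Set.countable_univ_iff]
  intro h
  have h1 : #Omega1 = Cardinal.lift.{1} (Cardinal.aleph 1 : Cardinal.{0}) := by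
    exact (Ordinal.mk_Iio_ordinal ((Cardinal.aleph 1).ord)).trans (by rw [Cardinal.card_ord])
  have h2 := Cardinal.mk_le_aleph0_iff.mpr h
  rw [h1] at h2
  have h3 : Cardinal.lift.{1} ℵ₀ < Cardinal.lift.{1} (Cardinal.aleph 1 : Cardinal.{0}) :=
    Cardinal.lift_lt.mpr Cardinal.aleph0_lt_aleph_one
  rw [Cardinal.lift_aleph0] at h3
  exact absurd h2 (not_le.mpr h3)

lemma omega1_embed {S : Set Omega1} (hS : S.Countable) :
    Nonempty (Omega1 ↪ ↥Sᶜ) := by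
  rw [← Cardinal.le_def]
  have h1 : #Omega1 = Cardinal.lift.{1} (Cardinal.aleph 1 : Cardinal.{0}) := by
    exact (Ordinal.mk_Iio_ordinal ((Cardinal.aleph 1).ord)).trans (by rw [Cardinal.card_ord])
  rw [h1]
  have hunc : ¬ (Sᶜ : Set Omega1).Countable := by
    intro hc
    exact omega1_not_countable (by simpa using hS.union hc)
  have h2 : ℵ₀ < #↥(Sᶜ) := by
    rw [← not_le]
    intro hle
    exact hunc (Set.countable_coe_iff.mp (Cardinal.mk_le_aleph0_iff.mp hle))
  have : Cardinal.lift.{1} (Cardinal.aleph 1 : Cardinal.{0}) = Order.succ ℵ₀ := by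
    rw [← Cardinal.aleph_zero, ← Cardinal.aleph_succ, Cardinal.lift_aleph]
    norm_num
  rw [this]
  exact Order.succ_le_of_lt h2

/-- In a compact Hausdorff first-countable ω₁-free space, every injective
ω₁-sequence admits two open sets with disjoint closures each of which contains
uncountably many terms of the sequence. -/
theorem two_uncountable_open_sets_with_disjoint_closures
    {X : Type*} [TopologicalSpace X] [CompactSpace X] [T2Space X]
    [FirstCountableTopology X]
    (hfree : ¬ ∃ (x : Omega1 → X) (p : X), Function.Injective x ∧
      ∀ U ∈ nhds p, ∃ α₀ : Omega1, ∀ β, α₀ ≤ β → x β ∈ U)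
    (x : Omega1 → X) (hx : Function.Injective x) :
    ∃ O₁ O₂ : Set X, IsOpen O₁ ∧ IsOpen O₂ ∧
      Disjoint (closure O₁) (closure O₂) ∧
      ¬ {α : Omega1 | x α ∈ O₁}.Countable ∧
      ¬ {α : Omega1 | x α ∈ O₂}.Countable := by
  -- an element of Omega1
  have hzero : (0 : Ordinal) < (Cardinal.aleph 1).ord := by
    rw [pos_iff_ne_zero]
    intro h0
    have := congrArg Ordinal.card h0
    simp [Cardinal.card_ord] at this
    exact (Cardinal.aleph0_lt_aleph_one.trans_eq this).not_gt Cardinal.aleph0_pos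
  let α₀ : Omega1 := ⟨0, hzero⟩
  -- "big" points: every open neighbourhood catches uncountably many indices
  have h1 : ∃ p : X, ∀ U : Set X, IsOpen U → p ∈ U → ¬ {α | x α ∈ U}.Countable := by
    by_contra hno
    push_neg at hno
    choose U hUopen hUmem hUcount using hno
    obtain ⟨t, ht⟩ := isCompact_univ.elim_finite_subcover U hUopen
      (fun p _ => Set.mem_iUnion.2 ⟨p, hUmem p⟩)
    apply omega1_not_countable
    have : (Set.univ : Set Omega1) ⊆ ⋃ p ∈ t, {α | x α ∈ U p} := by
      intro α _
      obtain ⟨p, hpt, hp⟩ := Set.mem_iUnion₂.1 (ht (Set.mem_univ (x α)))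
      exact Set.mem_iUnion₂.2 ⟨p, hpt, hp⟩
    exact (Set.Countable.biUnion t.countable_toSet (fun p _ => hUcount p)).mono this
  obtain ⟨p, hp⟩ := h1
  -- there are two distinct big points
  have h2 : ∃ q : X, q ≠ p ∧ ∀ U : Set X, IsOpen U → q ∈ U → ¬ {α | x α ∈ U}.Countable := by
    by_contra hno
    push_neg at hno
    have hsmall : ∀ q : X, q ≠ p → ∃ W : Set X, IsOpen W ∧ q ∈ W ∧ {α | x α ∈ W}.Countable := by
      intro q hq
      by_contra hW
      push_neg at hW
      obtain ⟨U, hUo, hUm, hUc⟩ := hno q hq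
      exact hW U hUo hUm hUc
    choose W hWopen hWmem hWcount using hsmall
    obtain ⟨U, hU⟩ := (nhds p).exists_antitone_basis
    have hcnt : ∀ n : ℕ, {α : Omega1 | x α ∉ interior (U n)}.Countable := by
      intro n
      have hK : IsCompact ((interior (U n))ᶜ) :=
        (isOpen_interior.isClosed_compl).isCompact
      have hcov : (interior (U n))ᶜ ⊆ ⋃ q : {q : X // q ≠ p}, W q.1 q.2 := by
        intro r hr
        have hrp : r ≠ p := by
          rintro rfl
          exact hr (mem_interior_iff_mem_nhds.2 (hU.mem n))
        exact Set.mem_iUnion.2 ⟨⟨r, hrp⟩, hWmem r hrp⟩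
      obtain ⟨t, ht⟩ := hK.elim_finite_subcover (fun q : {q : X // q ≠ p} => W q.1 q.2)
        (fun q => hWopen q.1 q.2) hcov
      have hsub : {α : Omega1 | x α ∉ interior (U n)} ⊆
          ⋃ q ∈ t, {α : Omega1 | x α ∈ W q.1 q.2} := by
        intro α hα
        obtain ⟨q, hqt, hq⟩ := Set.mem_iUnion₂.1 (ht hα)
        exact Set.mem_iUnion₂.2 ⟨q, hqt, hq⟩
      exact (Set.Countable.biUnion t.countable_toSet
        (fun q _ => hWcount q.1 q.2)).mono hsub
    have hScount : (⋃ n : ℕ, {α : Omega1 | x α ∉ interior (U n)}).Countable :=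
      Set.countable_iUnion hcnt
    obtain ⟨e⟩ := omega1_embed hScount
    apply hfree
    refine ⟨fun β => x (e β), p, hx.comp (Subtype.val_injective.comp e.injective), ?_⟩
    intro V hV
    obtain ⟨n, -, hn⟩ := (hU.toHasBasis.mem_iff.1 hV)
    refine ⟨α₀, fun β _ => ?_⟩
    have hβ := (e β).2
    simp only [Set.mem_compl_iff, Set.mem_iUnion, Set.mem_setOf_eq, not_exists,
      not_not] at hβ
    exact hn (interior_subset (hβ n))
  obtain ⟨q, hqp, hq⟩ := h2
  -- separate p and q by opens with disjoint closures
  obtain ⟨u, v, huo, hvo, hpu, hqv, huv⟩ := t2_separation hqp.symm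
  obtain ⟨Cp, hCp, hCpc, hCpu⟩ := exists_mem_nhds_isClosed_subset (huo.mem_nhds hpu)
  obtain ⟨Cq, hCq, hCqc, hCqv⟩ := exists_mem_nhds_isClosed_subset (hvo.mem_nhds hqv)
  refine ⟨interior Cp, interior Cq, isOpen_interior, isOpen_interior, ?_, ?_, ?_⟩
  · have h1 : closure (interior Cp) ⊆ u :=
      (closure_minimal interior_subset hCpc).trans hCpu
    have h2 : closure (interior Cq) ⊆ v :=
      (closure_minimal interior_subset hCqc).trans hCqv
    exact huv.mono h1 h2
  · exact hp _ isOpen_interior (mem_interior_iff_mem_nhds.2 hCp)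
  · exact hq _ isOpen_interior (mem_interior_iff_mem_nhds.2 hCq)
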